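/- Let F be a field of characteristic zero and let Δ = δ_0 ∘ {P_1(D),...,P_n(D)} be interpolation conditions given by polynomials P_1,...,P_n ∈ F[x_1,...,x_d]. If T = {X^{β_1},...,X^{β_n}} is a monomial interpolating basis for Δ, then for each i with 1 ≤ i ≤ n there exists a monomial X^{α_i} occurring with nonzero coefficient in P_i such that X^{α_i} ∈ T; that is, Λ{P_i} ∩ T ≠ ∅ for every i. -/
import Mathlib


open MvPolynomial

/-- The iterated partial derivative operator `D^α = ∂^{α_1}_{x_1} ⋯ ∂^{α_d}_{x_d}`. -/
noncomputable def Dmon (F : Type*) [CommSemiring F] {d : ℕ} (α : Fin d →₀ ℕ) :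
    Module.End F (MvPolynomial (Fin d) F) :=
  ((List.finRange d).map fun i =>
    ((pderiv i : Derivation F (MvPolynomial (Fin d) F) (MvPolynomial (Fin d) F)) :
      MvPolynomial (Fin d) F →ₗ[F] MvPolynomial (Fin d) F) ^ (α i)).prod

/-- The differential operator `P(D) = Σ_α P̂(α) D^α` induced by a polynomial `P`. -/
noncomputable def PD {F : Type*} [Field F] {d : ℕ} (P : MvPolynomial (Fin d) F) :
    Module.End F (MvPolynomial (Fin d) F) :=
  ∑ α ∈ P.support, P.coeff α • Dmon F α

/-- The linear functional `δ₀ ∘ P(D) : g ↦ (P(D) g)(0)`. -/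
noncomputable def delta0PD {F : Type*} [Field F] {d : ℕ} (P : MvPolynomial (Fin d) F) :
    MvPolynomial (Fin d) F →ₗ[F] F :=
  (MvPolynomial.aeval (0 : Fin d → F)).toLinearMap ∘ₗ PD P

/-- `prec` is a monomial ordering: a linear well-ordering of the monomials (identified with
their exponent vectors) that is compatible with multiplication of monomials. -/
structure IsMonomialOrder {d : ℕ} (prec : (Fin d →₀ ℕ) → (Fin d →₀ ℕ) → Prop) : Prop where
  irrefl : ∀ a, ¬ prec a a
  trans : ∀ a b c, prec a b → prec b c → prec a c
  total : ∀ a b, a ≠ b → prec a b ∨ prec b a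
  wf : WellFounded prec
  add_compat : ∀ a b c, prec a b → prec (a + c) (b + c)

/-- `m` is the `prec`-least monomial occurring in `P` with nonzero coefficient,
i.e. `X^m = lm(P)`. -/
def IsLeastMon {F : Type*} [Field F] {d : ℕ} (prec : (Fin d →₀ ℕ) → (Fin d →₀ ℕ) → Prop)
    (P : MvPolynomial (Fin d) F) (m : Fin d →₀ ℕ) : Prop :=
  m ∈ P.support ∧ ∀ m' ∈ P.support, m' ≠ m → prec m m'

/-- `{P_1, ..., P_n}` is a "reverse" reduced basis w.r.t. `prec`: the `P_i` are linearly
independent and `lm(P_i) ∉ Λ{P_j}` for all `i < j`. -/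
def IsRevReducedBasis {F : Type*} [Field F] {d n : ℕ}
    (prec : (Fin d →₀ ℕ) → (Fin d →₀ ℕ) → Prop) (P : Fin n → MvPolynomial (Fin d) F) : Prop :=
  LinearIndependent F P ∧
    ∀ i j : Fin n, i < j → ∀ m, IsLeastMon prec (P i) m → m ∉ (P j).support

/-- `T = {X^{β_1}, ..., X^{β_n}}` (indexed by the injective family `β`) is a monomial
interpolating basis for the interpolation conditions `lam_1, ..., lam_n`: for every vector of
values `f` there is a unique `g` in the span of `T` with `lam i g = f i` for all `i`. -/
def IsMonIntBasisFam {F : Type*} [Field F] {d n : ℕ}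
    (lam : Fin n → (MvPolynomial (Fin d) F →ₗ[F] F)) (β : Fin n → (Fin d →₀ ℕ)) : Prop :=
  ∀ f : Fin n → F, ∃! g : MvPolynomial (Fin d) F,
    g ∈ Submodule.span F (Set.range fun j => (monomial (β j) (1 : F) : MvPolynomial (Fin d) F))
      ∧ ∀ i, lam i g = f i

section Aux

variable {F : Type*} [Field F] {d : ℕ}

lemma pow_pderiv_monomial (i : Fin d) (k : ℕ) (β : Fin d →₀ ℕ) (c : F) :
    ((((pderiv i : Derivation F (MvPolynomial (Fin d) F) (MvPolynomial (Fin d) F)) :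
      MvPolynomial (Fin d) F →ₗ[F] MvPolynomial (Fin d) F)) ^ k) (monomial β c) =
    monomial (β - Finsupp.single i k) (c * ((β i).descFactorial k : F)) := by
  induction k with
  | zero => simp
  | succ k ih =>
    rw [pow_succ', Module.End.mul_apply, ih]
    simp only [Derivation.coeFn_coe, pderiv_monomial]
    rw [tsub_tsub, ← Finsupp.single_add]
    congr 1
    have : (β - Finsupp.single i k) i = β i - k := by
      simp [Finsupp.tsub_apply]
    rw [this, Nat.descFactorial_succ]
    push_cast [Nat.descFactorial_succ]
    ring

lemma foldr_single_apply (α : Fin d →₀ ℕ) (L : List (Fin d)) (a : Fin d) (ha : a ∉ L) :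
    (L.foldr (fun j s => Finsupp.single j (α j) + s) 0) a = 0 := by
  induction L with
  | nil => simp
  | cons i L ih =>
    simp only [List.mem_cons, not_or] at ha
    simp [Finsupp.single_apply, Ne.symm ha.1, ih ha.2]

lemma Dmon_list (α : Fin d →₀ ℕ) (L : List (Fin d)) (hL : L.Nodup) (β : Fin d →₀ ℕ) (c : F) :
    ((L.map fun i =>
      (((pderiv i : Derivation F (MvPolynomial (Fin d) F) (MvPolynomial (Fin d) F)) :
        MvPolynomial (Fin d) F →ₗ[F] MvPolynomial (Fin d) F)) ^ (α i)).prod) (monomial β c) =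
    monomial (β - L.foldr (fun j s => Finsupp.single j (α j) + s) 0)
      (c * (L.map fun i => ((β i).descFactorial (α i) : F)).prod) := by
  induction L with
  | nil => simp
  | cons i L ih =>
    obtain ⟨hi, hL'⟩ := List.nodup_cons.mp hL
    rw [List.map_cons, List.prod_cons, Module.End.mul_apply, ih hL', pow_pderiv_monomial]
    rw [List.foldr_cons, tsub_tsub, add_comm]
    congr 1
    have h0 : (β - L.foldr (fun j s => Finsupp.single j (α j) + s) 0) i = β i := by
      simp [Finsupp.tsub_apply, foldr_single_apply α L i hi]
    rw [h0, List.map_cons, List.prod_cons]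
    ring

lemma Dmon_monomial (α β : Fin d →₀ ℕ) (c : F) :
    Dmon F α (monomial β c) =
      monomial (β - α)
        (c * ((List.finRange d).map fun i => ((β i).descFactorial (α i) : F)).prod) := by
  rw [Dmon, Dmon_list α _ (List.nodup_finRange d)]
  congr 2
  have : (List.finRange d).foldr (fun j s => Finsupp.single j (α j) + s) 0 =
      ((List.finRange d).map fun j => Finsupp.single j (α j)).sum := by
    induction List.finRange d with
    | nil => simp
    | cons a L ih => simp [ih]
  rw [this, ← Fin.sum_univ_def, Finsupp.univ_sum_single]

lemma delta0PD_monomial_eq_zero {P : MvPolynomial (Fin d) F} {β : Fin d →₀ ℕ}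
    (hβ : β ∉ P.support) : delta0PD P (monomial β (1 : F)) = 0 := by
  rw [delta0PD, LinearMap.comp_apply, PD, LinearMap.coe_sum, Finset.sum_apply]
  rw [map_sum]
  refine Finset.sum_eq_zero fun α hα => ?_
  rw [LinearMap.smul_apply, Dmon_monomial, map_smul, smul_eq_mul]
  have hne : α ≠ β := fun h => hβ (h ▸ hα)
  rcases eq_or_ne (β - α) 0 with h0 | h0
  · -- β ≤ α, and α ≠ β, so some β i < α i, killing the descFactorial product
    have hle : β ≤ α := tsub_eq_zero_iff_le.mp h0
    have : ∃ i, β i < α i := by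
      by_contra hc
      push_neg at hc
      exact hne (le_antisymm (Finsupp.le_def.mpr fun i => hc i) hle)
    obtain ⟨i, hi⟩ := this
    have hz : (((β i).descFactorial (α i) : F)) = 0 := by
      rw [Nat.descFactorial_eq_zero_iff_lt.mpr hi]; simp
    have : ((List.finRange d).map fun i => ((β i).descFactorial (α i) : F)).prod = 0 := by
      apply List.prod_eq_zero
      exact List.mem_map.mpr ⟨i, List.mem_finRange i, hz⟩
    rw [this, mul_zero, map_zero, map_zero, mul_zero]
  · apply mul_eq_zero_of_right
    rw [AlgHom.toLinearMap_apply, aeval_monomial]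
    apply mul_eq_zero_of_right
    obtain ⟨i, hi⟩ := Finsupp.ne_iff.mp h0
    rw [Finsupp.prod]
    refine Finset.prod_eq_zero (i := i) ?_ ?_
    · simpa [Finsupp.mem_support_iff] using hi
    · simp only [Pi.zero_apply]
      rw [zero_pow]
      simpa using hi

end Aux

/-- If `T = {X^{β_1}, ..., X^{β_n}}` is a monomial interpolating basis for
`Δ = δ₀ ∘ {P_1(D), ..., P_n(D)}`, then each `P_i` contains at least one monomial of `T` with
nonzero coefficient, i.e. `Λ{P_i} ∩ T ≠ ∅` for every `i`. -/

theorem interpCond_contains_basisMonomial {F : Type*} [Field F] [CharZero F] {d n : ℕ}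
    (P : Fin n → MvPolynomial (Fin d) F)
    (β : Fin n → (Fin d →₀ ℕ)) (hβ : Function.Injective β)
    (hT : IsMonIntBasisFam (fun i => delta0PD (P i)) β) :
    ∀ i : Fin n, ∃ j : Fin n, β j ∈ (P i).support := by
  intro i
  by_contra hc
  push_neg at hc
  obtain ⟨g, ⟨hg_span, hg_val⟩, -⟩ := hT (Pi.single i 1)
  have hzero : delta0PD (P i) g = 0 := by
    have hsub : Set.range (fun j => (monomial (β j) (1 : F) : MvPolynomial (Fin d) F)) ⊆
        ↑(LinearMap.ker (delta0PD (P i))) := by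
      rintro x ⟨j, rfl⟩
      exact LinearMap.mem_ker.mpr (delta0PD_monomial_eq_zero (hc j))
    have := Submodule.span_le.mpr hsub
    exact LinearMap.mem_ker.mp (this hg_span)
  have h1 : delta0PD (P i) g = 1 := by
    simpa using hg_val i
  rw [hzero] at h1
  exact one_ne_zero h1.symm
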